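/- Assume q^{2l} = 1 where l ≥ 2 is the smallest positive integer with this property. Then the elements X₊^l, X₋^l and (C − λX₀)^l are central in B. -/

import Mathlib

noncomputable section

namespace SL2q

/-- The free algebra on the four generators X₀, X₊, X₋, C. -/
abbrev Free := FreeAlgebra ℂ (Fin 4)

def gX0 : Free := FreeAlgebra.ι ℂ 0
def gXp : Free := FreeAlgebra.ι ℂ 1
def gXm : Free := FreeAlgebra.ι ℂ 2
def gC  : Free := FreeAlgebra.ι ℂ 3

/-- The defining relations of the algebra B of Lyubashenko–Sudbery. -/
inductive Rel (q : ℂ) : Free → Free → Prop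
  | r1  : Rel q ((q ^ 2) • (gX0 * gXp) - gXp * gX0) (q • (gC * gXp))
  | r2  : Rel q ((q⁻¹ ^ 2) • (gX0 * gXm) - gXm * gX0) (-(q⁻¹ • (gC * gXm)))
  | r3  : Rel q (gXp * gXm - gXm * gXp)
      ((q + q⁻¹) • ((gC - (q - q⁻¹) • gX0) * gX0))
  | rc0 : Rel q (gC * gX0) (gX0 * gC)
  | rcp : Rel q (gC * gXp) (gXp * gC)
  | rcm : Rel q (gC * gXm) (gXm * gC)

/-- The algebra B, presented by generators and relations. -/
abbrev B (q : ℂ) := RingQuot (Rel q)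

def X0 (q : ℂ) : B q := RingQuot.mkAlgHom ℂ (Rel q) gX0
def Xp (q : ℂ) : B q := RingQuot.mkAlgHom ℂ (Rel q) gXp
def Xm (q : ℂ) : B q := RingQuot.mkAlgHom ℂ (Rel q) gXm
def Cc (q : ℂ) : B q := RingQuot.mkAlgHom ℂ (Rel q) gC

/-- C'₂ = X₋X₊ + q⁻¹ C X₀ + q⁻² X₀². -/
def C2 (q : ℂ) : B q :=
  Xm q * Xp q + q⁻¹ • (Cc q * X0 q) + (q⁻¹ ^ 2) • (X0 q) ^ 2

section Aux
set_option linter.unnecessarySeqFocus false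

variable (q : ℂ)

lemma rel1 : (q ^ 2) • (X0 q * Xp q) - Xp q * X0 q = q • (Cc q * Xp q) := by
  have := RingQuot.mkAlgHom_rel ℂ (Rel.r1 (q := q))
  simpa [map_sub, map_smul, map_mul, X0, Xp, Cc] using this

lemma rel2 : (q⁻¹ ^ 2) • (X0 q * Xm q) - Xm q * X0 q = -(q⁻¹ • (Cc q * Xm q)) := by
  have := RingQuot.mkAlgHom_rel ℂ (Rel.r2 (q := q))
  simpa [map_sub, map_smul, map_mul, X0, Xm, Cc] using this

lemma rel3 : Xp q * Xm q - Xm q * Xp q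
    = (q + q⁻¹) • ((Cc q - (q - q⁻¹) • X0 q) * X0 q) := by
  have := RingQuot.mkAlgHom_rel ℂ (Rel.r3 (q := q))
  simpa [map_sub, map_smul, map_mul, X0, Xp, Xm, Cc] using this

lemma rc0 : Cc q * X0 q = X0 q * Cc q := by
  have := RingQuot.mkAlgHom_rel ℂ (Rel.rc0 (q := q))
  simpa [map_mul, X0, Cc] using this

lemma rcp : Cc q * Xp q = Xp q * Cc q := by
  have := RingQuot.mkAlgHom_rel ℂ (Rel.rcp (q := q))
  simpa [map_mul, Xp, Cc] using this

lemma rcm : Cc q * Xm q = Xm q * Cc q := by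
  have := RingQuot.mkAlgHom_rel ℂ (Rel.rcm (q := q))
  simpa [map_mul, Xm, Cc] using this

variable (hq : q ≠ 0)
include hq

lemma h0p : X0 q * Xp q = (q⁻¹ ^ 2) • (Xp q * X0 q) + q⁻¹ • (Xp q * Cc q) := by
  have h := rel1 q
  rw [rcp] at h
  have h2 : X0 q * Xp q = (q⁻¹^2) • ((q^2) • (X0 q * Xp q)) := by
    rw [smul_smul]; field_simp; rw [one_smul]
  rw [h2, sub_eq_iff_eq_add.mp h]
  match_scalars <;> (field_simp; try ring_nf; try tauto)

lemma h0m : X0 q * Xm q = (q ^ 2) • (Xm q * X0 q) - q • (Xm q * Cc q) := by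
  have h := rel2 q
  rw [rcm] at h
  have h2 : X0 q * Xm q = (q^2) • ((q⁻¹^2) • (X0 q * Xm q)) := by
    rw [smul_smul]; field_simp; rw [one_smul]
  rw [h2, sub_eq_iff_eq_add.mp h]
  match_scalars <;> field_simp <;> ring

/-- Y = C − λ X₀ -/
def Y : B q := Cc q - (q - q⁻¹) • X0 q

omit hq
lemma hY0 : Y q * X0 q = X0 q * Y q := by
  simp only [Y, sub_mul, mul_sub, smul_mul_assoc, mul_smul_comm, rc0]

lemma hYc : Y q * Cc q = Cc q * Y q := by
  simp only [Y, sub_mul, mul_sub, smul_mul_assoc, mul_smul_comm, rc0]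

include hq
lemma hYp : Y q * Xp q = (q⁻¹ ^ 2) • (Xp q * Y q) := by
  simp only [Y, sub_mul, mul_sub, smul_mul_assoc, mul_smul_comm, smul_sub, rcp, h0p q hq]
  match_scalars <;> (field_simp; try ring_nf; try tauto)

lemma hYm : Y q * Xm q = (q ^ 2) • (Xm q * Y q) := by
  simp only [Y, sub_mul, mul_sub, smul_mul_assoc, mul_smul_comm, smul_sub, rcm, h0m q hq]
  match_scalars <;> (field_simp; try ring_nf; try tauto)

end Aux

def Bc (c t : ℂ) : ℕ → ℂ
  | 0 => 0
  | n+1 => Bc c t n + c * t^n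

def Ec (t : ℂ) : ℕ → ℂ
  | 0 => 1
  | n+1 => t^2 * Ec t n + 1

def Fc (t : ℂ) : ℕ → ℂ
  | 0 => 0
  | n+1 => t * Fc t n + t * Ec t n

lemma Bc_mul (c t : ℂ) (n : ℕ) : (t - 1) * Bc c t n = c * (t^n - 1) := by
  induction n with
  | zero => simp [Bc]
  | succ n ih => rw [Bc]; ring_nf; ring_nf at ih; linear_combination ih

lemma Ec_mul (t : ℂ) (n : ℕ) : (t^2 - 1) * Ec t n = t^(2*n+2) - 1 := by
  induction n with
  | zero => simp [Ec]; try ring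
  | succ n ih => rw [Ec]; linear_combination t^2 * ih

lemma Fc_mul (t : ℂ) (n : ℕ) :
    (t - 1) * ((t^2 - 1) * Fc t n) = (t^n - 1) * (t^(n+2) - t) := by
  induction n with
  | zero => simp [Fc]
  | succ n ih => rw [Fc]; linear_combination t * ih + t * (t-1) * Ec_mul t n

lemma Bc_zero (c t : ℂ) (ht : t ≠ 1) (l : ℕ) (htl : t^l = 1) : Bc c t l = 0 := by
  have h := Bc_mul c t l
  rw [htl, sub_self, mul_zero] at h
  exact (mul_eq_zero.mp h).resolve_left (sub_ne_zero.mpr ht)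

lemma Ec_zero (t : ℂ) (ht : t ≠ 1) (m : ℕ) (htl : t^(m+1) = 1) :
    (1 + t) * Ec t m = 0 := by
  have h := Ec_mul t m
  have h2 : t^(2*m+2) = 1 := by
    have : t^(2*m+2) = (t^(m+1))^2 := by ring
    rw [this, htl, one_pow]
  rw [h2, sub_self] at h
  have ht' : t - 1 ≠ 0 := sub_ne_zero.mpr ht
  have : (t - 1) * ((1+t) * Ec t m) = 0 := by linear_combination h
  exact (mul_eq_zero.mp this).resolve_left ht'

lemma Fc_zero (t : ℂ) (ht : t ≠ 1) (m : ℕ) (htl : t^(m+1) = 1) :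
    (1 + t) * Fc t m = 0 := by
  have h := Fc_mul t m
  have h2 : t^(m+2) - t = 0 := by
    have : t^(m+2) = t * t^(m+1) := by ring
    rw [this, htl, mul_one, sub_self]
  rw [h2, mul_zero] at h
  have ht' : t - 1 ≠ 0 := sub_ne_zero.mpr ht
  have : (t-1) * ((t-1) * ((1+t) * Fc t m)) = 0 := by linear_combination h
  have := (mul_eq_zero.mp this).resolve_left ht'
  exact (mul_eq_zero.mp this).resolve_left ht'

section Aux2
variable (q : ℂ) (hq : q ≠ 0)
include hq

lemma hDp : (Y q * Cc q) * Xp q = (q⁻¹^2) • (Xp q * (Y q * Cc q)) := by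
  rw [mul_assoc, rcp, ← mul_assoc, hYp q hq, smul_mul_assoc, mul_assoc]

lemma hAp : (Y q * X0 q) * Xp q
    = ((q⁻¹^2)^2) • (Xp q * (Y q * X0 q)) + (q⁻¹^3) • (Xp q * (Y q * Cc q)) := by
  rw [mul_assoc, h0p q hq, mul_add, mul_smul_comm, mul_smul_comm,
    ← mul_assoc, ← mul_assoc, hYp q hq, smul_mul_assoc, smul_mul_assoc,
    mul_assoc, mul_assoc]
  match_scalars <;> (field_simp; try ring_nf; try tauto)

lemma hDm : (Y q * Cc q) * Xm q = (q^2) • (Xm q * (Y q * Cc q)) := by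
  rw [mul_assoc, rcm, ← mul_assoc, hYm q hq, smul_mul_assoc, mul_assoc]

lemma hAm : (Y q * X0 q) * Xm q
    = ((q^2)^2) • (Xm q * (Y q * X0 q)) - (q^3) • (Xm q * (Y q * Cc q)) := by
  rw [mul_assoc, h0m q hq, mul_sub, mul_smul_comm, mul_smul_comm,
    ← mul_assoc, ← mul_assoc, hYm q hq, smul_mul_assoc, smul_mul_assoc,
    mul_assoc, mul_assoc]
  match_scalars <;> (field_simp; try ring_nf; try tauto)

lemma h0pn (n : ℕ) : X0 q * Xp q ^ n
    = ((q⁻¹^2)^n) • (Xp q ^ n * X0 q) + (Bc q⁻¹ (q⁻¹^2) n) • (Xp q ^ n * Cc q) := by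
  induction n with
  | zero => simp [Bc]
  | succ n ih =>
    rw [pow_succ, ← mul_assoc, ih, add_mul, smul_mul_assoc, smul_mul_assoc,
      mul_assoc, mul_assoc, h0p q hq, mul_assoc, rcp]
    simp only [pow_succ, mul_add, add_mul, mul_sub, sub_mul, smul_add, smul_sub,
      smul_mul_assoc, mul_smul_comm, smul_smul, mul_assoc, Bc, Ec, Fc]
    match_scalars <;> ring

lemma h0mn (n : ℕ) : X0 q * Xm q ^ n
    = ((q^2)^n) • (Xm q ^ n * X0 q) + (Bc (-q) (q^2) n) • (Xm q ^ n * Cc q) := by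
  induction n with
  | zero => simp [Bc]
  | succ n ih =>
    rw [pow_succ, ← mul_assoc, ih, add_mul, smul_mul_assoc, smul_mul_assoc,
      mul_assoc, mul_assoc, h0m q hq, mul_assoc, rcm]
    simp only [pow_succ, mul_add, add_mul, mul_sub, sub_mul, smul_add, smul_sub,
      smul_mul_assoc, mul_smul_comm, smul_smul, mul_assoc, Bc, Ec, Fc]
    match_scalars <;> ring

omit hq
lemma hpm0 : Xp q * Xm q = Xm q * Xp q + (q + q⁻¹) • (Y q * X0 q) := by
  have := rel3 q
  rw [sub_eq_iff_eq_add] at this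
  rw [this, Y, add_comm]

include hq
lemma hpmn (n : ℕ) : Xp q ^ (n+1) * Xm q
    = Xm q * Xp q ^ (n+1)
      + ((q + q⁻¹) * Ec (q⁻¹^2) n) • (Xp q ^ n * (Y q * X0 q))
      + (q⁻¹ * (q + q⁻¹) * Fc (q⁻¹^2) n) • (Xp q ^ n * (Y q * Cc q)) := by
  induction n with
  | zero => simp [Ec, Fc, hpm0 q]
  | succ n ih =>
    rw [pow_succ, mul_assoc, hpm0 q, mul_add, ← mul_assoc, ih, add_mul, add_mul,
      smul_mul_assoc, smul_mul_assoc, mul_assoc (Xm q), ← pow_succ,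
      mul_assoc (Xp q ^ n) (Y q * X0 q), hAp q hq,
      mul_assoc (Xp q ^ n) (Y q * Cc q), hDp q hq]
    simp only [pow_succ, mul_add, add_mul, mul_sub, sub_mul, smul_add, smul_sub,
      smul_mul_assoc, mul_smul_comm, smul_smul, mul_assoc, Bc, Ec, Fc]
    match_scalars <;> ring

lemma hmpn (n : ℕ) : Xm q ^ (n+1) * Xp q
    = Xp q * Xm q ^ (n+1)
      - ((q + q⁻¹) * Ec (q^2) n) • (Xm q ^ n * (Y q * X0 q))
      + (q * (q + q⁻¹) * Fc (q^2) n) • (Xm q ^ n * (Y q * Cc q)) := by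
  have hmp0 : Xm q * Xp q = Xp q * Xm q - (q + q⁻¹) • (Y q * X0 q) := by
    rw [hpm0 q]; abel
  induction n with
  | zero => simp [Ec, Fc, hmp0]
  | succ n ih =>
    rw [pow_succ, mul_assoc, hmp0, mul_sub, ← mul_assoc, ih, add_mul, sub_mul,
      smul_mul_assoc, smul_mul_assoc, mul_assoc (Xp q), ← pow_succ,
      mul_assoc (Xm q ^ n) (Y q * X0 q), hAm q hq,
      mul_assoc (Xm q ^ n) (Y q * Cc q), hDm q hq]
    simp only [pow_succ, mul_add, add_mul, mul_sub, sub_mul, smul_add, smul_sub,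
      smul_mul_assoc, mul_smul_comm, smul_smul, mul_assoc, Bc, Ec, Fc]
    match_scalars <;> ring

lemma hYpn (n : ℕ) : Y q ^ n * Xp q = ((q⁻¹^2)^n) • (Xp q * Y q ^ n) := by
  induction n with
  | zero => simp
  | succ n ih =>
    rw [pow_succ, mul_assoc, hYp q hq, mul_smul_comm, ← mul_assoc, ih,
      smul_mul_assoc, mul_assoc, ← pow_succ, smul_smul, pow_succ]
    ring_nf

lemma hYmn (n : ℕ) : Y q ^ n * Xm q = ((q^2)^n) • (Xm q * Y q ^ n) := by
  induction n with
  | zero => simp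
  | succ n ih =>
    rw [pow_succ, mul_assoc, hYm q hq, mul_smul_comm, ← mul_assoc, ih,
      smul_mul_assoc, mul_assoc, ← pow_succ, smul_smul, pow_succ]
    ring_nf

end Aux2

lemma mem_center (q : ℂ) (z : B q)
    (h0 : X0 q * z = z * X0 q) (hp : Xp q * z = z * Xp q)
    (hm : Xm q * z = z * Xm q) (hc : Cc q * z = z * Cc q) :
    z ∈ Subalgebra.center ℂ (B q) := by
  rw [Subalgebra.mem_center_iff]
  intro b
  obtain ⟨a, rfl⟩ := RingQuot.mkAlgHom_surjective ℂ (Rel q) b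
  induction a using FreeAlgebra.induction with
  | grade0 r => rw [AlgHom.commutes]; exact Algebra.commutes r z
  | grade1 i =>
    fin_cases i
    · exact h0
    · exact hp
    · exact hm
    · exact hc
  | mul a b iha ihb =>
    rw [map_mul, mul_assoc, ihb, ← mul_assoc, iha, mul_assoc]
  | add a b iha ihb =>
    rw [map_add, add_mul, iha, ihb, mul_add]

theorem pow_l_central' (q : ℂ) (hq : q ≠ 0) (hq2 : q ^ 2 ≠ 1)
    (l : ℕ) (hl : 2 ≤ l) (hq2l : q ^ (2 * l) = 1)
    (hmin : ∀ m : ℕ, 0 < m → m < l → q ^ (2 * m) ≠ 1) :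
    Xp q ^ l ∈ Subalgebra.center ℂ (B q) ∧
    Xm q ^ l ∈ Subalgebra.center ℂ (B q) ∧
    (Cc q - (q - q⁻¹) • X0 q) ^ l ∈ Subalgebra.center ℂ (B q) := by
  obtain ⟨m, rfl⟩ : ∃ m, l = m + 1 := ⟨l - 1, by omega⟩
  set l := m + 1 with hldef
  -- root of unity facts
  have htp : (q ^ 2) ^ l = 1 := by
    rw [← pow_mul]; exact hq2l
  have htm : (q⁻¹ ^ 2) ^ l = 1 := by
    rw [inv_pow, inv_pow, htp, inv_one]
  have htp1 : (q : ℂ) ^ 2 ≠ 1 := hq2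
  have htm1 : (q⁻¹ : ℂ) ^ 2 ≠ 1 := by
    simpa [inv_pow, inv_eq_one] using hq2
  have hqq : q + q⁻¹ = q * (1 + q⁻¹ ^ 2) := by field_simp
  have hqq' : q + q⁻¹ = q⁻¹ * (1 + q ^ 2) := by field_simp; ring
  -- coefficients vanish
  have hBp : Bc q⁻¹ (q⁻¹ ^ 2) l = 0 := Bc_zero _ _ htm1 l htm
  have hBm : Bc (-q) (q ^ 2) l = 0 := Bc_zero _ _ htp1 l htp
  have hEp : (q + q⁻¹) * Ec (q⁻¹ ^ 2) m = 0 := by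
    rw [hqq, mul_assoc, Ec_zero _ htm1 m htm, mul_zero]
  have hEm : (q + q⁻¹) * Ec (q ^ 2) m = 0 := by
    rw [hqq', mul_assoc, Ec_zero _ htp1 m htp, mul_zero]
  have hFp : q⁻¹ * (q + q⁻¹) * Fc (q⁻¹ ^ 2) m = 0 := by
    rw [mul_assoc, hqq, mul_assoc, Fc_zero _ htm1 m htm, mul_zero, mul_zero]
  have hFm : q * (q + q⁻¹) * Fc (q ^ 2) m = 0 := by
    rw [mul_assoc, hqq', mul_assoc, Fc_zero _ htp1 m htp, mul_zero, mul_zero]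
  have hYeq : Cc q - (q - q⁻¹) • X0 q = Y q := rfl
  refine ⟨?_, ?_, ?_⟩
  · refine mem_center q _ ?_ ?_ ?_ ?_
    · rw [h0pn q hq l, htm, hBp, one_smul, zero_smul, add_zero]
    · exact (Commute.refl (Xp q)).pow_right l
    · have := hpmn q hq m
      rw [hEp, hFp, zero_smul, zero_smul, add_zero, add_zero] at this
      exact this.symm
    · exact Commute.pow_right (show Commute (Cc q) (Xp q) from rcp q) l
  · refine mem_center q _ ?_ ?_ ?_ ?_
    · rw [h0mn q hq l, htp, hBm, one_smul, zero_smul, add_zero]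
    · have := hmpn q hq m
      rw [hEm, hFm, zero_smul, zero_smul, sub_zero, add_zero] at this
      exact this.symm
    · exact (Commute.refl (Xm q)).pow_right l
    · exact Commute.pow_right (show Cc q * Xm q = Xm q * Cc q from rcm q) l
  · rw [hYeq]
    refine mem_center q _ ?_ ?_ ?_ ?_
    · exact Commute.pow_right (show Commute (X0 q) (Y q) from (hY0 q).symm) l
    · have := hYpn q hq l
      rw [htm, one_smul] at this
      exact this.symm
    · have := hYmn q hq l
      rw [htp, one_smul] at this
      exact this.symm
    · exact Commute.pow_right (show Commute (Cc q) (Y q) from (hYc q).symm) l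

/-- if l ≥ 2 is the smallest positive integer with q^{2l} = 1,
then X₊^l, X₋^l and (C − λX₀)^l are central in B. -/
theorem pow_l_central (q : ℂ) (hq : q ≠ 0) (hq2 : q ^ 2 ≠ 1)
    (l : ℕ) (hl : 2 ≤ l) (hq2l : q ^ (2 * l) = 1)
    (hmin : ∀ m : ℕ, 0 < m → m < l → q ^ (2 * m) ≠ 1) :
    Xp q ^ l ∈ Subalgebra.center ℂ (B q) ∧
    Xm q ^ l ∈ Subalgebra.center ℂ (B q) ∧
    (Cc q - (q - q⁻¹) • X0 q) ^ l ∈ Subalgebra.center ℂ (B q) := by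
  exact pow_l_central' q hq hq2 l hl hq2l hmin

end SL2q
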